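/- (Lemma: Inverse of the generalized delocalization operator E_ab.) The operator E_ab is invertible on integrable functions with inverse given by the explicit operator E_ab⁻¹: for every integrable h : α → ℝ and every x ∈ α one has E_ab(E_ab⁻¹ h)(x) = h(x) and E_ab⁻¹(E_ab h)(x) = h(x). -/

import Mathlib

open MeasureTheory

/-- Total (coordinate) volume `V := μ(α)` as a real number. -/
noncomputable def totalVol {α : Type*} [MeasurableSpace α] (μ : Measure α) : ℝ :=
  (μ Set.univ).toReal

/-- Spatial average `⟨f⟩ := (1/V) ∫ f dμ`. -/
noncomputable def avg {α : Type*} [MeasurableSpace α] (μ : Measure α) (f : α → ℝ) : ℝ :=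
  (totalVol μ)⁻¹ * ∫ x, f x ∂μ

/-- The generalized delocalization operator `E_ab`:
`(E_ab f)(x) = ⟨f⟩ + A(x)⁻¹·(B(x)⁻¹·f(x) − ⟨B⁻¹·f⟩)`. -/
noncomputable def opEab {α : Type*} [MeasurableSpace α] (μ : Measure α) (A B : α → ℝ)
    (f : α → ℝ) : α → ℝ :=
  fun x => avg μ f + (A x)⁻¹ * ((B x)⁻¹ * f x - avg μ (fun y => (B y)⁻¹ * f y))

/-- The operator `E_ab⁻¹`:
`(E_ab⁻¹ h)(x) = B(x)·A(x)·h(x) − B(x)·A(x)·(∫A·h)/(∫A) − B(x)·(∫B·A·h)/(∫B)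
  + B(x)·((V + ∫B·A)/(∫B))·(∫A·h)/(∫A)`. -/
noncomputable def opEabInv {α : Type*} [MeasurableSpace α] (μ : Measure α) (A B : α → ℝ)
    (h : α → ℝ) : α → ℝ :=
  fun x => B x * A x * h x
    - B x * A x * (∫ y, A y * h y ∂μ) / (∫ y, A y ∂μ)
    - B x * (∫ y, B y * A y * h y ∂μ) / (∫ y, B y ∂μ)
    + B x * ((totalVol μ + ∫ y, B y * A y ∂μ) / (∫ y, B y ∂μ))
        * (∫ y, A y * h y ∂μ) / (∫ y, A y ∂μ)

/-- Lemma: Inverse of the generalized delocalization operator `E_ab`.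
`E_ab` is invertible on integrable functions with inverse `E_ab⁻¹`: for every integrable
`h` and every `x`, `E_ab(E_ab⁻¹ h)(x) = h(x)` and `E_ab⁻¹(E_ab h)(x) = h(x)`. -/
theorem opEab_inverse
    {α : Type*} [MeasurableSpace α] (μ : Measure α) [IsFiniteMeasure μ]
    (hV : 0 < totalVol μ)
    (A B : α → ℝ) (hA : Measurable A) (hB : Measurable B)
    (c C : ℝ) (hc : 0 < c) (hcC : c ≤ C)
    (hboundA : ∀ x, c ≤ A x ∧ A x ≤ C) (hboundB : ∀ x, c ≤ B x ∧ B x ≤ C) :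
    ∀ h : α → ℝ, Integrable h μ → ∀ x,
      opEab μ A B (opEabInv μ A B h) x = h x ∧
      opEabInv μ A B (opEab μ A B h) x = h x := by
  -- basic positivity / nonvanishing facts
  have hAx : ∀ x, (0:ℝ) < A x := fun x => lt_of_lt_of_le hc (hboundA x).1
  have hBx : ∀ x, (0:ℝ) < B x := fun x => lt_of_lt_of_le hc (hboundB x).1
  have hAxne : ∀ x, A x ≠ 0 := fun x => ne_of_gt (hAx x)
  have hBxne : ∀ x, B x ≠ 0 := fun x => ne_of_gt (hBx x)
  have hVne : totalVol μ ≠ 0 := ne_of_gt hV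
  have hVconst : (0:ℝ) < (μ Set.univ).toReal := hV
  -- integrability of A, B, B*A
  have hAint : Integrable A μ := by
    refine Integrable.mono' (integrable_const C) hA.aestronglyMeasurable
      (Filter.Eventually.of_forall fun x => ?_)
    rw [Real.norm_eq_abs, abs_of_pos (hAx x)]
    exact (hboundA x).2
  have hBint : Integrable B μ := by
    refine Integrable.mono' (integrable_const C) hB.aestronglyMeasurable
      (Filter.Eventually.of_forall fun x => ?_)
    rw [Real.norm_eq_abs, abs_of_pos (hBx x)]
    exact (hboundB x).2
  have hBAint : Integrable (fun y => B y * A y) μ := by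
    refine Integrable.mono' (integrable_const (C * C)) (hB.mul hA).aestronglyMeasurable
      (Filter.Eventually.of_forall fun x => ?_)
    rw [Real.norm_eq_abs, abs_of_pos (mul_pos (hBx x) (hAx x))]
    exact mul_le_mul (hboundB x).2 (hboundA x).2 (le_of_lt (hAx x)) (le_trans (le_of_lt hc) hcC)
  -- positivity of ∫ A and ∫ B
  have hconstc : (0:ℝ) < ∫ _y, c ∂μ := by
    rw [integral_const, smul_eq_mul]; exact mul_pos hVconst hc
  have hIA : (0:ℝ) < ∫ y, A y ∂μ :=
    hconstc.trans_le (integral_mono (integrable_const c) hAint fun x => (hboundA x).1)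
  have hIB : (0:ℝ) < ∫ y, B y ∂μ :=
    hconstc.trans_le (integral_mono (integrable_const c) hBint fun x => (hboundB x).1)
  have hIAne : (∫ y, A y ∂μ) ≠ 0 := ne_of_gt hIA
  have hIBne : (∫ y, B y ∂μ) ≠ 0 := ne_of_gt hIB
  intro h hint x
  -- integrability of products with h
  have hAh : Integrable (fun y => A y * h y) μ :=
    hint.bdd_mul hA.aestronglyMeasurable
      (c := C) (Filter.Eventually.of_forall fun y => by rw [Real.norm_eq_abs, abs_of_pos (hAx y)]; exact (hboundA y).2)
  have hBAh : Integrable (fun y => B y * A y * h y) μ := by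
    have := hint.bdd_mul (hB.mul hA).aestronglyMeasurable
      (c := C * C) (Filter.Eventually.of_forall fun y => by
        rw [Pi.mul_apply, Real.norm_eq_abs, abs_of_pos (mul_pos (hBx y) (hAx y))]
        exact mul_le_mul (hboundB y).2 (hboundA y).2 (le_of_lt (hAx y))
          (le_trans (le_of_lt hc) hcC))
    simpa using this
  have hBih : Integrable (fun y => (B y)⁻¹ * h y) μ :=
    hint.bdd_mul (hB.inv).aestronglyMeasurable
      (c := c⁻¹) (Filter.Eventually.of_forall fun y => by
        rw [Real.norm_eq_abs, abs_of_pos (inv_pos.2 (hBx y))]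
        exact inv_anti₀ hc (hboundB y).1)
  -- abbreviations
  set V := totalVol μ with hVdef
  set IA := ∫ y, A y ∂μ with hIAdef
  set IB := ∫ y, B y ∂μ with hIBdef
  set IBA := ∫ y, B y * A y ∂μ with hIBAdef
  set IAh := ∫ y, A y * h y ∂μ with hIAhdef
  set IBAh := ∫ y, B y * A y * h y ∂μ with hIBAhdef
  set k1 : ℝ := -(IAh / IA) with hk1
  set k2 : ℝ := -(IBAh / IB) + ((V + IBA) / IB) * (IAh / IA) with hk2
  constructor
  · -- E_ab (E_ab⁻¹ h) = h
    have hrep : opEabInv μ A B h = fun y => B y * A y * h y + k1 * (B y * A y) + k2 * B y := by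
      funext y
      simp only [opEabInv, hk1, hk2, ← hVdef, ← hIAdef, ← hIBdef, ← hIBAdef, ← hIAhdef,
        ← hIBAhdef]
      ring
    have i1 : Integrable (fun y => B y * A y * h y + k1 * (B y * A y)) μ :=
      hBAh.add (hBAint.const_mul k1)
    have i2 : Integrable (fun y => k1 * (B y * A y)) μ := hBAint.const_mul k1
    have key1 : ∫ y, opEabInv μ A B h y ∂μ = IBAh + k1 * IBA + k2 * IB := by
      simp only [hrep]
      rw [integral_add i1 (hBint.const_mul k2), integral_add hBAh i2,
        integral_const_mul, integral_const_mul]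
    have hrep2 : (fun y => (B y)⁻¹ * opEabInv μ A B h y)
        = fun y => A y * h y + k1 * A y + k2 := by
      funext y
      rw [hrep]
      field_simp [hBxne y]
    have i3 : Integrable (fun y => A y * h y + k1 * A y) μ := hAh.add (hAint.const_mul k1)
    have i4 : Integrable (fun y => k1 * A y) μ := hAint.const_mul k1
    have key2 : ∫ y, (B y)⁻¹ * opEabInv μ A B h y ∂μ = IAh + k1 * IA + k2 * V := by
      rw [hrep2]
      rw [integral_add i3 (integrable_const k2), integral_add hAh i4,
        integral_const_mul, integral_const, smul_eq_mul]
      rw [← hIAdef, ← hIAhdef]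
      have : μ.real Set.univ = V := rfl
      rw [this]; ring
    have hvalx : (B x)⁻¹ * opEabInv μ A B h x = A x * h x + k1 * A x + k2 :=
      congrFun hrep2 x
    simp only [opEab, avg, ← hVdef]
    rw [key1, key2, hvalx, hk1, hk2]
    clear_value V IA IB IBA IAh IBAh k1 k2
    field_simp [hAxne x, hVne, hIAne, hIBne]
    ring
  · -- E_ab⁻¹ (E_ab h) = h
    set Ih := ∫ y, h y ∂μ with hIhdef
    set IBih := ∫ y, (B y)⁻¹ * h y ∂μ with hIBihdef
    set a : ℝ := V⁻¹ * Ih with ha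
    set b : ℝ := V⁻¹ * IBih with hb
    have hAf : (fun y => A y * opEab μ A B h y)
        = fun y => a * A y + ((B y)⁻¹ * h y + (-b)) := by
      funext y
      simp only [opEab, avg, ← hVdef, ← hIhdef, ← hIBihdef, ← ha, ← hb]
      field_simp [hAxne y, hBxne y]
      ring
    have hBAf : (fun y => B y * A y * opEab μ A B h y)
        = fun y => a * (B y * A y) + (h y + (-b) * B y) := by
      funext y
      simp only [opEab, avg, ← hVdef, ← hIhdef, ← hIBihdef, ← ha, ← hb]
      field_simp [hAxne y, hBxne y]
      ring
    have j1 : Integrable (fun y => (B y)⁻¹ * h y + (-b)) μ := hBih.add (integrable_const (-b))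
    have keyA : ∫ y, A y * opEab μ A B h y ∂μ = a * IA + (IBih + (-b) * V) := by
      rw [hAf, integral_add (hAint.const_mul a) j1,
        integral_add hBih (integrable_const (-b)), integral_const_mul, integral_const,
        smul_eq_mul]
      rw [← hIAdef, ← hIBihdef]
      have : μ.real Set.univ = V := rfl
      rw [this]; ring
    have j2 : Integrable (fun y => h y + (-b) * B y) μ := hint.add (hBint.const_mul (-b))
    have keyBA : ∫ y, B y * A y * opEab μ A B h y ∂μ = a * IBA + (Ih + (-b) * IB) := by
      rw [hBAf, integral_add (hBAint.const_mul a) j2,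
        integral_add hint (hBint.const_mul (-b)), integral_const_mul, integral_const_mul]
    have hvalx : B x * A x * opEab μ A B h x = a * (B x * A x) + (h x + (-b) * B x) :=
      congrFun hBAf x
    simp only [opEabInv]
    rw [← hVdef, ← hIAdef, ← hIBdef, ← hIBAdef, keyA, keyBA, hvalx, ha, hb]
    clear_value V IA IB IBA IAh IBAh k1 k2 Ih IBih a b
    field_simp [hAxne x, hBxne x, hVne, hIAne, hIBne]
    ring
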